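/- Let $\{a_n\}_{n=1}^\infty$ be an unbounded sequence of real numbers, and suppose there exist $r > 1$ and $C > 0$ such that $a_n < C r^n$ for all $n \in \mathbb{N}$. Then for any $\gamma > r$ there exists a strictly increasing sequence of indices $\{n_k\}_{k=1}^\infty$ (with each $n_k \geq 2$) such that for every $k$, $a_{n_k} > a_{n_k - 1}$ and $\gamma\, a_{n_k} \geq a_{n_k + 1}$. -/

import Mathlib

open Filter

private lemma stmt1_key (a : ℕ → ℝ) (r C : ℝ) (hr : 1 < r) (hC : 0 < C)
    (hunbdd : ∀ M : ℝ, ∃ n, 1 ≤ n ∧ M < a n)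
    (hgrowth : ∀ n, 1 ≤ n → a n < C * r ^ n)
    (γ : ℝ) (hγ : r < γ) (N : ℕ) :
    ∃ n, N < n ∧ 2 ≤ n ∧ a n > a (n - 1) ∧ γ * a n ≥ a (n + 1) := by
  have hγ1 : 1 < γ := lt_trans hr hγ
  have hγ0 : 0 < γ := lt_trans one_pos hγ1
  set N' : ℕ := max N 1 with hN'
  have hN1 : 1 ≤ N' := le_max_right _ _
  set M : ℝ := C * r ^ N' with hM
  have hM0 : 0 < M := by positivity
  have hMbig : ∀ j, 1 ≤ j → j ≤ N' → a j < M := by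
    intro j hj1 hjN
    calc a j < C * r ^ j := hgrowth j hj1
    _ ≤ C * r ^ N' := by
        apply mul_le_mul_of_nonneg_left _ hC.le
        exact pow_le_pow_right₀ (le_of_lt hr) hjN
  set c : ℕ → ℝ := fun j => a j / γ ^ j with hc
  have hcb : ∀ j, 1 ≤ j → c j < C * (r / γ) ^ j := by
    intro j hj
    have hγp : (0:ℝ) < γ ^ j := pow_pos hγ0 j
    rw [hc]
    simp only [div_pow, ← mul_div_assoc]
    exact (div_lt_div_iff_of_pos_right hγp).mpr (hgrowth j hj)
  obtain ⟨n0, hn01, hn0⟩ := hunbdd M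
  have hcn0 : 0 < c n0 := div_pos (lt_trans hM0 hn0) (pow_pos hγ0 n0)
  -- find B such that for j ≥ B, C * (r/γ)^j < c n0
  have hρ : Tendsto (fun j : ℕ => C * (r / γ) ^ j) atTop (nhds 0) := by
    have h1 : |r / γ| < 1 := by
      rw [abs_of_pos (div_pos (lt_trans one_pos hr) hγ0)]
      rw [div_lt_one hγ0]; exact hγ
    have := tendsto_pow_atTop_nhds_zero_of_abs_lt_one h1
    simpa using this.const_mul C
  obtain ⟨B, hB⟩ := (hρ.eventually_lt_const hcn0).exists_forall_of_atTop
  -- maximize c over the finite set of indices j ≤ B + n0 with 1 ≤ j and M < a j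
  set F : Finset ℕ := (Finset.range (B + n0 + 1)).filter (fun j => 1 ≤ j ∧ M < a j)
    with hF
  have hn0F : n0 ∈ F := by
    simp only [hF, Finset.mem_filter, Finset.mem_range]
    exact ⟨by omega, hn01, hn0⟩
  obtain ⟨n, hnF, hmax⟩ := F.exists_max_image c ⟨n0, hn0F⟩
  simp only [hF, Finset.mem_filter, Finset.mem_range] at hnF
  obtain ⟨-, hn1, hna⟩ := hnF
  have hclaim : ∀ j, 1 ≤ j → M < a j → c j ≤ c n := by
    intro j hj1 hja
    by_cases hjB : j < B + n0 + 1
    · exact hmax j (by simp only [hF, Finset.mem_filter, Finset.mem_range]; exact ⟨hjB, hj1, hja⟩)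
    · have hjB' : B ≤ j := by omega
      have := hB j hjB'
      have h2 : c j < c n0 := lt_trans (hcb j hj1) this
      exact le_trans h2.le (hmax n0 hn0F)
  have han : 0 < a n := lt_trans hM0 hna
  have hnN : N' < n := by
    by_contra h
    push_neg at h
    exact absurd hna (not_lt_of_gt (hMbig n hn1 h))
  have h2n : 2 ≤ n := by omega
  refine ⟨n, by omega, h2n, ?_, ?_⟩
  · -- a (n-1) < a n
    by_cases hprev : a (n - 1) ≤ M
    · exact lt_of_le_of_lt hprev hna
    · push_neg at hprev
      have h1 : 1 ≤ n - 1 := by omega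
      have hcc := hclaim (n - 1) h1 hprev
      rw [hc] at hcc
      simp only at hcc
      have hpow : (0:ℝ) < γ ^ (n - 1) := pow_pos hγ0 _
      have hpow' : (0:ℝ) < γ ^ n := pow_pos hγ0 _
      rw [div_le_div_iff₀ hpow hpow'] at hcc
      have hsplit : γ ^ n = γ ^ (n - 1) * γ := by
        rw [← pow_succ]; congr 1; omega
      rw [hsplit] at hcc
      have h3 : a (n - 1) * γ ≤ a n :=
        le_of_mul_le_mul_right (by nlinarith [hcc]) hpow
      nlinarith
  · -- a (n+1) ≤ γ * a n
    by_cases hnext : a (n + 1) ≤ M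
    · have : a (n + 1) ≤ a n := le_trans hnext hna.le
      nlinarith
    · push_neg at hnext
      have hcc := hclaim (n + 1) (by omega) hnext
      rw [hc] at hcc
      simp only at hcc
      have hpow : (0:ℝ) < γ ^ n := pow_pos hγ0 _
      have hpow' : (0:ℝ) < γ ^ (n + 1) := pow_pos hγ0 _
      rw [div_le_div_iff₀ hpow' hpow, pow_succ] at hcc
      have := (mul_le_mul_iff_of_pos_right hpow).mp (by linarith : a (n + 1) * γ ^ n ≤ γ * a n * γ ^ n)
      linarith

/-- unbounded sequences of at most exponential growth. -/
theorem stmt1 (a : ℕ → ℝ) (r C : ℝ) (hr : 1 < r) (hC : 0 < C)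
    (hunbdd : ∀ M : ℝ, ∃ n, 1 ≤ n ∧ M < a n)
    (hgrowth : ∀ n, 1 ≤ n → a n < C * r ^ n)
    (γ : ℝ) (hγ : r < γ) :
    ∃ m : ℕ → ℕ, StrictMono m ∧ (∀ k, 2 ≤ m k) ∧
      ∀ k, a (m k) > a (m k - 1) ∧ γ * a (m k) ≥ a (m k + 1) := by
  have key := stmt1_key a r C hr hC hunbdd hgrowth γ hγ
  set f : ℕ → ℕ := fun k => Nat.rec (key 0).choose (fun _ prev => (key prev).choose) k
    with hf
  have hstep : ∀ k, f k < f (k + 1) := by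
    intro k
    exact (key (f k)).choose_spec.1
  have hmono : StrictMono f := strictMono_nat_of_lt_succ hstep
  have hprop : ∀ k, 2 ≤ f k ∧ a (f k) > a (f k - 1) ∧ γ * a (f k) ≥ a (f k + 1) := by
    intro k
    cases k with
    | zero => exact (key 0).choose_spec.2
    | succ j => exact (key (f j)).choose_spec.2
  exact ⟨f, hmono, fun k => (hprop k).1, fun k => (hprop k).2⟩
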